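/- Let G be a finite simple graph on n vertices with adjacency matrix A(G) and permanental polynomial π(G,x) = per(xI − A(G)). Suppose there exists an orientation G^e of G, i.e., a real n×n skew-symmetric matrix A(G^e) with entries in {0, 1, −1} satisfying |A(G^e)_{uv}| = A(G)_{uv} for all u, v, such that π(G,x) = det(xI − A(G^e)). Then G is bipartite. -/

import Mathlib

open Polynomial SimpleGraph
open scoped Classical

noncomputable section

/-- The adjacency matrix of a simple graph `G`, with entries in `R`. -/
def adjMat (R : Type*) [Zero R] [One R] {V : Type*} [Fintype V] (G : SimpleGraph V) :
    Matrix V V R := fun u v => if G.Adj u v then 1 else 0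

/-- The characteristic polynomial `det (xI - A(G))` of a simple graph `G`. -/
def charPolyG (R : Type*) [CommRing R] {V : Type*} [Fintype V] (G : SimpleGraph V) : R[X] :=
  (adjMat R G).charpoly

/-- The permanental polynomial `per (xI - A(G))` of a simple graph `G`. -/
def permPolyG (R : Type*) [CommRing R] {V : Type*} [Fintype V] (G : SimpleGraph V) : R[X] :=
  (Matrix.charmatrix (adjMat R G)).permanent

/-- The modified characteristic polynomial `φ_p(G,x) = ∑_{i even} (-1)^{i/2} a_i x^{n-i}`
of a (bipartite) graph `G` on `n` vertices, where `a_i` is the coefficient of `x^{n-i}`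
in the characteristic polynomial. -/
def phiP {V : Type*} [Fintype V] (G : SimpleGraph V) : ℝ[X] :=
  ∑ i ∈ Finset.range (Fintype.card V + 1),
    if Even i then
      C ((-1 : ℝ) ^ (i / 2) * (charPolyG ℝ G).coeff (Fintype.card V - i)) *
        X ^ (Fintype.card V - i)
    else 0

/-- `G` contains no cycle whose length is divisible by 4. -/
def C4kFree {V : Type*} (G : SimpleGraph V) : Prop :=
  ¬ ∃ (v : V) (c : G.Walk v v), c.IsCycle ∧ 4 ∣ c.length

/-- `G` is `4k`-intercyclic: it contains no two vertex-disjoint cycles,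
each of length divisible by 4. -/
def Intercyclic4k {V : Type*} (G : SimpleGraph V) : Prop :=
  ¬ ∃ (u v : V) (c : G.Walk u u) (d : G.Walk v v),
      c.IsCycle ∧ d.IsCycle ∧ 4 ∣ c.length ∧ 4 ∣ d.length ∧
      ∀ x, x ∈ c.support → x ∉ d.support

/-- A subgraph `R` of `G` is a cycle of `G` if it is the subgraph traced by some cycle walk. -/
def IsCycleSubgraph {V : Type*} (G : SimpleGraph V) (R : G.Subgraph) : Prop :=
  ∃ (v : V) (c : G.Walk v v), c.IsCycle ∧ R = c.toSubgraph

/-- The set of all `4k`-cycles (cycles of length divisible by 4) of `G`,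
viewed as subgraphs. -/
def cycles4k {V : Type*} (G : SimpleGraph V) : Set G.Subgraph :=
  {R | ∃ (v : V) (c : G.Walk v v), c.IsCycle ∧ 4 ∣ c.length ∧ R = c.toSubgraph}

/-- The connected component `c` of the subgraph `H` is a single edge (a `K₂`). -/
def IsEdgeComp {V : Type*} {G : SimpleGraph V} (H : G.Subgraph)
    (c : H.coe.ConnectedComponent) : Prop :=
  ∃ x y : H.verts, H.coe.Adj x y ∧ c.supp = {x, y}

/-- The connected component `c` of the subgraph `H` is a cycle: there is a cycle walk whose
support is exactly `c` and which uses every edge of `H` inside `c`. -/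
def IsCycleComp {V : Type*} {G : SimpleGraph V} (H : G.Subgraph)
    (c : H.coe.ConnectedComponent) : Prop :=
  ∃ (v : H.verts) (w : H.coe.Walk v v), w.IsCycle ∧
    {x | x ∈ w.support} = c.supp ∧
    ∀ x y : H.verts, H.coe.Adj x y → x ∈ c.supp → w.toSubgraph.Adj x y

/-- A Sachs subgraph of `G`: a subgraph each of whose connected components is either
a single edge or a cycle. -/
def IsSachs {V : Type*} {G : SimpleGraph V} (H : G.Subgraph) : Prop :=
  ∀ c : H.coe.ConnectedComponent, IsEdgeComp H c ∨ IsCycleComp H c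

/-- The number of connected components of the subgraph `H`. -/
def pCount {V : Type*} {G : SimpleGraph V} (H : G.Subgraph) : ℕ :=
  Nat.card H.coe.ConnectedComponent

/-- The number of components of `H` that are cycles of length divisible by 4. -/
def sCount {V : Type*} {G : SimpleGraph V} (H : G.Subgraph) : ℕ :=
  Set.ncard {c : H.coe.ConnectedComponent | IsCycleComp H c ∧ c.supp.ncard % 4 = 0}

/-- The number of components of `H` that are cycles of length congruent to 2 mod 4. -/
def tCount {V : Type*} {G : SimpleGraph V} (H : G.Subgraph) : ℕ :=
  Set.ncard {c : H.coe.ConnectedComponent | IsCycleComp H c ∧ c.supp.ncard % 4 = 2}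

/-- The number of components of `H` that are cycles. -/
def cycCount {V : Type*} {G : SimpleGraph V} (H : G.Subgraph) : ℕ :=
  Set.ncard {c : H.coe.ConnectedComponent | IsCycleComp H c}

/-- `R` is a union of connected components of `H`. -/
def IsComponentUnion {V : Type*} {G : SimpleGraph V} (R H : G.Subgraph) : Prop :=
  R ≤ H ∧ ∀ x y, H.Adj x y → x ∈ R.verts → R.Adj x y



section StmtTwoHelpers

open Finset

private lemma colorable_of_no_odd_closed_walk {V : Type*} (G : SimpleGraph V)
    (h : ∀ (x : V) (p : G.Walk x x), ¬ Odd p.length) : G.Colorable 2 := by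
  have key : ∀ (a b : V) (p q : G.Walk a b), (Odd p.length ↔ Odd q.length) := by
    intro a b p q
    have := h a (p.append q.reverse)
    rw [SimpleGraph.Walk.length_append, SimpleGraph.Walk.length_reverse] at this
    rw [Nat.not_odd_iff_even, Nat.even_add] at this
    rw [Nat.even_iff, Nat.even_iff] at this
    rw [Nat.odd_iff, Nat.odd_iff]
    omega
  let rep : V → V := fun v => (G.connectedComponentMk v).out
  have hreach : ∀ v, G.Reachable v (rep v) := by
    intro v
    rw [← SimpleGraph.ConnectedComponent.eq]
    exact (Quot.out_eq _).symm
  let W : ∀ v, G.Walk v (rep v) := fun v => (hreach v).some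
  let c : V → Bool := fun v => decide (Odd (W v).length)
  have hvalid : ∀ {a b : V}, G.Adj a b → c a ≠ c b := by
    intro a b hab
    have hrep : rep b = rep a := by
      show Quot.out (G.connectedComponentMk b) = Quot.out (G.connectedComponentMk a)
      rw [SimpleGraph.ConnectedComponent.connectedComponentMk_eq_of_adj hab]
    have := key a (rep a) (W a) ((SimpleGraph.Walk.cons hab (W b)).copy rfl hrep)
    simp only [SimpleGraph.Walk.length_copy, SimpleGraph.Walk.length_cons] at this
    simp only [c, decide_eq_decide, ne_eq]
    rw [this, Nat.odd_add_one]
    simp [Nat.even_iff, Nat.odd_iff]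
    omega
  have C : G.Coloring Bool := SimpleGraph.Coloring.mk c (fun hab => hvalid hab)
  have := C.colorable
  rwa [Fintype.card_bool] at this

private lemma exists_nodup_odd_closed_walk {V : Type*} (G : SimpleGraph V)
    (hx : ∃ (x : V) (p : G.Walk x x), Odd p.length) :
    ∃ (x : V) (p : G.Walk x x), Odd p.length ∧ p.support.tail.Nodup := by
  classical
  have hP : ∃ n, ∃ (x : V) (p : G.Walk x x), p.length = n ∧ Odd n := by
    obtain ⟨x, p, hp⟩ := hx; exact ⟨p.length, x, p, rfl, hp⟩
  obtain ⟨x, p, hlen, hodd⟩ := Nat.find_spec hP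
  refine ⟨x, p, hlen ▸ hodd, ?_⟩
  by_contra hnd
  obtain ⟨a, ha⟩ : ∃ a, 2 ≤ p.support.tail.count a := by
    by_contra hcon; push_neg at hcon
    exact hnd (List.nodup_iff_count_le_one.mpr (fun a => by have := hcon a; omega))
  have hmem : a ∈ p.support := List.mem_of_mem_tail (List.count_pos_iff.mp (by omega))
  set p' := p.rotate a hmem with hp'def
  have hcount' : 2 ≤ p'.support.tail.count a := by
    rw [(p.support_rotate a hmem).perm.count_eq]; exact ha
  have hlen' : p'.length = Nat.find hP := by
    rw [hp'def]
    have h2 := congrArg Walk.length (p.take_spec hmem)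
    rw [Walk.length_append] at h2
    unfold Walk.rotate
    rw [Walk.length_append]
    omega
  clear_value p'
  cases p' with
  | nil => simp at hcount'
  | @cons _ y _ h r =>
    simp only [Walk.support_cons, List.tail_cons] at hcount'
    have hmem' : a ∈ r.support := List.count_pos_iff.mp (by omega)
    set t := r.takeUntil a hmem' with htdef
    set d := r.dropUntil a hmem' with hddef
    have hspec : t.append d = r := r.take_spec hmem'
    have hcount_t : t.support.count a = 1 := r.count_support_takeUntil_eq_one hmem'
    have hsupp : r.support = t.support ++ d.support.tail := by
      rw [← hspec, Walk.support_append]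
    have hdne : d.support.tail ≠ [] := by
      intro hnil
      rw [hsupp, List.count_append, hnil] at hcount'
      simp [hcount_t] at hcount'
    have hdlen : 1 ≤ d.length := by
      have := d.length_support
      rcases Nat.eq_zero_or_pos d.length with h0 | h1
      · exfalso; apply hdne
        have : d.support.length = 1 := by omega
        rw [← List.length_eq_zero_iff]
        simp [List.length_tail, this]
      · exact h1
    have hsum : (t.length + 1) + d.length = Nat.find hP := by
      have := congrArg Walk.length hspec
      rw [Walk.length_append] at this
      rw [← hlen']
      simp only [Walk.length_cons]
      omega
    have hoddn : Odd (Nat.find hP) := hlen ▸ hodd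
    have : Odd (t.length + 1) ∨ Odd d.length := by
      rcases Nat.even_or_odd (t.length + 1) with he | ho
      · right
        rw [Nat.odd_iff] at hoddn ⊢; rw [Nat.even_iff] at he; omega
      · left; exact ho
    have hclen : (Walk.cons h t).length = t.length + 1 := by simp
    rcases this with ho | ho
    · exact Nat.find_min hP (by omega) ⟨a, Walk.cons h t, hclen, ho⟩
    · exact Nat.find_min hP (by omega) ⟨a, d, rfl, ho⟩

private lemma adj_formPerm_of_closed_walk {V : Type*} [DecidableEq V] {G : SimpleGraph V}
    {x : V} (p : G.Walk x x) (hne0 : p.length ≠ 0) (hnd : p.support.tail.Nodup) :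
    ∀ v ∈ p.support.tail, G.Adj v (p.support.tail.formPerm v) := by
  set l := p.support.tail with hl
  have hlen : l.length = p.length := by
    have := p.length_support; simp [hl, List.length_tail, this]
  have hne : l ≠ [] := by
    intro h0
    rw [h0] at hlen
    simp at hlen
    exact hne0 hlen.symm
  have hsupp : p.support = x :: l := p.support_eq_cons
  have hchain : List.Chain G.Adj x l := by
    have := p.isChain_adj_support
    rw [hsupp] at this
    exact this
  have hlast : l.getLast hne = x := by
    have h2 := p.getLast_support
    simp only [hsupp] at h2
    rwa [List.getLast_cons hne] at h2
  have hadj : ∀ i (hi : i < l.length),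
      G.Adj l[i] (l[(i + 1) % l.length]'(Nat.mod_lt _ (by omega))) := by
    replace hchain : (∀ h : 0 < l.length, G.Adj x l[0]) ∧
        ∀ (i : ℕ) (h : i < l.length - 1), G.Adj l[i] l[i+1] := by
      have h' : List.IsChain G.Adj (x :: l) := hchain
      rw [List.isChain_iff_getElem] at h'
      exact ⟨fun h => h' 0 (by simp; omega), fun i h => h' (i+1) (by simp; omega)⟩
    intro i hi
    rcases Nat.lt_or_ge (i + 1) l.length with h1 | h1
    · have hmod : (i + 1) % l.length = i + 1 := Nat.mod_eq_of_lt h1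
      rw [getElem_congr_idx hmod]
      simpa using hchain.2 i (by omega)
    · have hieq : i + 1 = l.length := by omega
      have hmod : (i + 1) % l.length = 0 := by simp [hieq]
      rw [getElem_congr_idx hmod]
      have hx : l[i] = x := by
        rw [← hlast, List.getLast_eq_getElem]
        exact getElem_congr_idx (by omega)
      rw [hx]
      have h0 : 0 < l.length := List.length_pos_iff.mpr hne
      simpa [List.get_eq_getElem] using hchain.1 h0
  intro v hv
  obtain ⟨i, hi, rfl⟩ := List.mem_iff_getElem.mp hv
  rw [List.formPerm_apply_getElem _ hnd i hi]
  exact hadj i hi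

private lemma prod_charmatrix_coeff {V : Type*} [Fintype V] (M : Matrix V V ℝ)
    (hdiag : ∀ v, M v v = 0) (σ : Equiv.Perm V) (d : ℕ) :
    (∏ v, Matrix.charmatrix M (σ v) v).coeff d =
      if (univ.filter fun v => σ v = v).card = d then
        (-1 : ℝ) ^ (univ.filter fun v => ¬ σ v = v).card *
          ∏ v ∈ univ.filter (fun v => ¬ σ v = v), M (σ v) v
      else 0 := by
  have h1 : ∏ v ∈ univ.filter (fun v => σ v = v), Matrix.charmatrix M (σ v) v
      = X ^ (univ.filter fun v => σ v = v).card := by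
    rw [Finset.prod_congr rfl (fun v hv => ?_), Finset.prod_const]
    simp only [Finset.mem_filter] at hv
    rw [hv.2, Matrix.charmatrix_apply_eq, hdiag, map_zero, sub_zero]
  have h2 : ∏ v ∈ univ.filter (fun v => ¬ σ v = v), Matrix.charmatrix M (σ v) v
      = C ((-1 : ℝ) ^ (univ.filter fun v => ¬ σ v = v).card *
          ∏ v ∈ univ.filter (fun v => ¬ σ v = v), M (σ v) v) := by
    rw [map_mul, map_pow, map_neg, map_one, map_prod]
    calc ∏ v ∈ univ.filter (fun v => ¬ σ v = v), Matrix.charmatrix M (σ v) v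
        = ∏ v ∈ univ.filter (fun v => ¬ σ v = v), ((-1) * C (M (σ v) v)) := by
          refine Finset.prod_congr rfl (fun v hv => ?_)
          simp only [Finset.mem_filter] at hv
          rw [Matrix.charmatrix_apply_ne _ _ _ hv.2]
          ring
      _ = (∏ _v ∈ univ.filter (fun v => ¬ σ v = v), (-1 : ℝ[X])) *
            ∏ v ∈ univ.filter (fun v => ¬ σ v = v), C (M (σ v) v) := Finset.prod_mul_distrib
      _ = _ := by rw [Finset.prod_const]
  have hsplit : (∏ v, Matrix.charmatrix M (σ v) v) =
      C ((-1 : ℝ) ^ (univ.filter fun v => ¬ σ v = v).card *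
          ∏ v ∈ univ.filter (fun v => ¬ σ v = v), M (σ v) v)
        * X ^ (univ.filter fun v => σ v = v).card := by
    rw [← Finset.prod_filter_mul_prod_filter_not univ (fun v => σ v = v), h1, h2, mul_comm]
  rw [hsplit, coeff_C_mul, coeff_X_pow]
  by_cases hc : (univ.filter fun v => σ v = v).card = d
  · simp [hc]
  · simp only [hc, if_false]
    rw [if_neg (fun h => hc h.symm)]
    ring

private lemma skew_charpoly_coeff_eq_zero {V : Type*} [Fintype V] (B : Matrix V V ℝ)
    (hskew : B.transpose = -B) (d : ℕ) (hodd : Odd (Fintype.card V - d)) :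
    B.charpoly.coeff d = 0 := by
  have hBskew : ∀ u v, B u v = - B v u := by
    intro u v
    have := congrFun (congrFun hskew v) u
    simpa [Matrix.transpose_apply, Matrix.neg_apply] using this
  have hdiag : ∀ v, B v v = 0 := fun v => by have := hBskew v v; linarith
  have hfix : ∀ σ : Equiv.Perm V,
      (univ.filter fun v => σ⁻¹ v = v) = (univ.filter fun v => σ v = v) := by
    intro σ
    apply Finset.filter_congr
    intro v _
    rw [Equiv.Perm.inv_eq_iff_eq]
    simp [eq_comm]
  have hmov : ∀ σ : Equiv.Perm V,
      (univ.filter fun v => ¬ σ⁻¹ v = v) = (univ.filter fun v => ¬ σ v = v) := by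
    intro σ
    apply Finset.filter_congr
    intro v _
    rw [Equiv.Perm.inv_eq_iff_eq]
    simp [eq_comm]
  set f : Equiv.Perm V → ℝ :=
    fun σ => Equiv.Perm.sign σ • (∏ v, Matrix.charmatrix B (σ v) v).coeff d with hf
  have hkey : ∀ σ : Equiv.Perm V, f σ + f σ⁻¹ = 0 := by
    intro σ
    rw [hf]
    simp only
    rw [prod_charmatrix_coeff B hdiag σ d, prod_charmatrix_coeff B hdiag σ⁻¹ d,
      hfix σ, hmov σ, Equiv.Perm.sign_inv]
    by_cases hc : (univ.filter fun v => σ v = v).card = d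
    · simp only [hc, if_true]
      have hcard : (univ.filter fun v => ¬ σ v = v).card = Fintype.card V - d := by
        have := Finset.card_filter_add_card_filter_not (s := univ)
          (p := fun v => σ v = v)
        simp only [Finset.card_univ] at this
        omega
      have hoddc : Odd (univ.filter fun v => ¬ σ v = v).card := hcard ▸ hodd
      have hprod : (∏ v ∈ univ.filter (fun v => ¬ σ v = v), B (σ⁻¹ v) v)
          = - ∏ v ∈ univ.filter (fun v => ¬ σ v = v), B (σ v) v := by
        have step1 : (∏ v ∈ univ.filter (fun v => ¬ σ v = v), B (σ⁻¹ v) v)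
            = ∏ w ∈ univ.filter (fun v => ¬ σ v = v), B w (σ w) := by
          apply Finset.prod_nbij' (fun v => σ⁻¹ v) (fun w => σ w)
          · intro a ha
            simp only [Finset.mem_filter, Finset.mem_univ, true_and] at ha ⊢
            intro h
            exact ha (by simpa using congrArg σ h)
          · intro a ha
            simp only [Finset.mem_filter, Finset.mem_univ, true_and] at ha ⊢
            intro h
            exact ha (σ.injective h)
          · intro a _; simp
          · intro a _; simp
          · intro a _; simp
        rw [step1, Finset.prod_congr rfl (fun w _ => hBskew w (σ w)),
          Finset.prod_congr rfl (fun x _ => (neg_one_mul (B (σ x) x)).symm),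
          Finset.prod_mul_distrib, Finset.prod_const, hoddc.neg_one_pow, neg_one_mul]
      rw [hprod]
      simp only [Units.smul_def, zsmul_eq_mul]
      ring
    · simp [hc]
  rw [Matrix.charpoly, Matrix.det_apply, Polynomial.finset_sum_coeff]
  simp only [Polynomial.coeff_smul]
  apply Finset.sum_ninvolution (fun σ => σ⁻¹) hkey
  · intro σ hne heq
    have := hkey σ
    rw [heq] at this
    exact hne (by linarith)
  · intro σ; exact Finset.mem_univ _
  · intro σ; simp

end StmtTwoHelpers

/-- If some orientation `G^e` of `G` (given by a real skew-symmetric matrix `B`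
with entries in `{0, 1, -1}` whose absolute values reproduce the adjacency matrix of `G`)
satisfies `π(G,x) = det (xI - A(G^e))`, then `G` is bipartite. -/
theorem stmt_2 {V : Type*} [Fintype V] (G : SimpleGraph V) (B : Matrix V V ℝ)
    (hskew : B.transpose = -B)
    (hentries : ∀ u v, B u v = 0 ∨ B u v = 1 ∨ B u v = -1)
    (habs : ∀ u v, |B u v| = adjMat ℝ G u v)
    (hperm : permPolyG ℝ G = B.charpoly) :
    G.Colorable 2 := by
  classical
  by_contra hcol
  have hx : ∃ (x : V) (p : G.Walk x x), Odd p.length := by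
    by_contra hno
    push_neg at hno
    exact hcol (colorable_of_no_odd_closed_walk G hno)
  obtain ⟨x, p, hodd, hnd⟩ := exists_nodup_odd_closed_walk G hx
  set l := p.support.tail with hl
  set A := adjMat ℝ G with hA
  have hAdiag : ∀ v, A v v = 0 := fun v => by simp [hA, adjMat]
  have hA01 : ∀ u v, A u v = 0 ∨ A u v = 1 := by
    intro u v
    by_cases h : G.Adj u v <;> simp [hA, adjMat, h]
  have hne0 : p.length ≠ 0 := by
    intro h; rw [h] at hodd; simp at hodd
  have hne1 : p.length ≠ 1 := by
    intro h1
    have hadj := p.adj_getVert_succ (i := 0) (by omega)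
    rw [p.getVert_zero] at hadj
    have hgv : p.getVert 1 = x := by
      conv_lhs => rw [← h1]
      exact p.getVert_length
    rw [hgv] at hadj
    exact G.irrefl hadj
  have hllen : l.length = p.length := by
    have := p.length_support; simp [hl, List.length_tail, this]
  have h2le : 2 ≤ l.length := by
    rw [hllen]; omega
  set σ₀ := l.formPerm with hσ₀
  have hadjσ : ∀ v ∈ l, G.Adj v (σ₀ v) := adj_formPerm_of_closed_walk p hne0 hnd
  have hmovset : (Finset.univ.filter fun v => ¬ σ₀ v = v) = l.toFinset := by
    ext v
    simp only [Finset.mem_filter, Finset.mem_univ, true_and, List.mem_toFinset]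
    constructor
    · exact fun h => List.mem_of_formPerm_apply_ne h
    · intro hv
      exact (List.formPerm_apply_mem_ne_self_iff _ hnd v hv).mpr h2le
  have hkcard : (Finset.univ.filter fun v => ¬ σ₀ v = v).card = p.length := by
    rw [hmovset, List.toFinset_card_of_nodup hnd, hllen]
  have hkle : p.length ≤ Fintype.card V := by
    rw [← hllen]
    exact hnd.length_le_card
  set n := Fintype.card V with hn
  set d := n - p.length with hd
  have hndodd : Odd (n - d) := by
    have : n - d = p.length := by omega
    rw [this]; exact hodd
  have hcardsum : ∀ τ : Equiv.Perm V,
      (Finset.univ.filter fun v => τ v = v).card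
        + (Finset.univ.filter fun v => ¬ τ v = v).card = n := by
    intro τ
    have := Finset.card_filter_add_card_filter_not
      (s := (Finset.univ : Finset V)) (p := fun v => τ v = v)
    simpa [Finset.card_univ] using this
  set u : Equiv.Perm V → ℝ := fun τ =>
    if (Finset.univ.filter fun v => τ v = v).card = d then
      ∏ v ∈ Finset.univ.filter (fun v => ¬ τ v = v), A (τ v) v
    else 0 with hu
  have hcoeff : (permPolyG ℝ G).coeff d = (-1 : ℝ) ^ p.length * ∑ τ : Equiv.Perm V, u τ := by
    rw [permPolyG, Matrix.permanent, Polynomial.finset_sum_coeff, Finset.mul_sum]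
    apply Finset.sum_congr rfl
    intro τ _
    rw [← hA, prod_charmatrix_coeff A hAdiag τ d, hu]
    by_cases hc : (Finset.univ.filter fun v => τ v = v).card = d
    · simp only [hc, if_true]
      have hmc : (Finset.univ.filter fun v => ¬ τ v = v).card = p.length := by
        have := hcardsum τ
        omega
      rw [hmc]
    · simp [hc]
  have hunneg : ∀ τ : Equiv.Perm V, 0 ≤ u τ := by
    intro τ
    rw [hu]
    simp only
    split
    · apply Finset.prod_nonneg
      intro v _
      rcases hA01 (τ v) v with h | h <;> rw [h] <;> norm_num
    · exact le_refl 0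
  have huσ₀ : u σ₀ = 1 := by
    rw [hu]
    simp only
    rw [if_pos (by have := hcardsum σ₀; omega)]
    apply Finset.prod_eq_one
    intro v hv
    rw [hmovset, List.mem_toFinset] at hv
    have := (hadjσ v hv).symm
    simp [hA, adjMat, this]
  have hsum_pos : (1 : ℝ) ≤ ∑ τ : Equiv.Perm V, u τ := by
    rw [← huσ₀]
    exact Finset.single_le_sum (fun τ _ => hunneg τ) (Finset.mem_univ σ₀)
  have hzero : (permPolyG ℝ G).coeff d = 0 := by
    rw [hperm]
    exact skew_charpoly_coeff_eq_zero B hskew d hndodd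
  rw [hcoeff] at hzero
  have hne : ((-1 : ℝ) ^ p.length) ≠ 0 := by
    apply pow_ne_zero; norm_num
  rcases mul_eq_zero.mp hzero with h | h
  · exact hne h
  · linarith


end
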